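/- Let w be a Fubini word in W_{n,k} with initial positions {i_1 < ... < i_m} (so m = k), and let w * 1 in W_{n+1,k} be the word obtained by appending w_{i_m} (the last initial letter) to w. Then conv(w*1) = conv(w) followed by w_{i_m}, std(conv(w*1)) = std(conv(w)) x 1 in S_{n+1}, and sigma(w*1) = sigma(w) x 1 in S_{n+1}; consequently the Schubert polynomial satisfies S_{w*1} = S_w. -/

import Mathlib

/-- The position (0-indexed) of the first occurrence of the letter `c` in the word `w`. -/
noncomputable def firstOcc (n k : ℕ) (w : Fin n → Fin k) (c : Fin k) : ℕ :=
  sInf {i : ℕ | ∃ h : i < n, w ⟨i, h⟩ = c}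

/-- The sorting key grouping the positions of `w` by the first occurrence of their letter. -/
noncomputable def sortKey (n k : ℕ) (w : Fin n → Fin k) (i : Fin n) : Lex (ℕ × ℕ) :=
  toLex (firstOcc n k w (w i), (i : ℕ))

/-- `σ(w)`: the permutation obtained by listing, for each initial letter of `w` in order, the
positions of all occurrences of that letter in increasing order; it is the minimal permutation
sending the convexification `conv(w)` to `w`. -/
noncomputable def sigmaPerm (n k : ℕ) (w : Fin n → Fin k) : Equiv.Perm (Fin n) :=
  (Tuple.sort (sortKey n k w))⁻¹

/-- A word `v` is convex if it contains no subword `i … j … i` with `i ≠ j`. -/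
def IsConvexWord {n k : ℕ} (v : Fin n → Fin k) : Prop :=
  ∀ a b c : Fin n, a < b → b < c → v a = v c → v a = v b

/-- A position `i` is initial in `v` if `v i' ≠ v i` for all `i' < i`. -/
def isInitialPos {n k : ℕ} (v : Fin n → Fin k) (i : Fin n) : Prop :=
  ∀ i' : Fin n, i' < i → v i' ≠ v i

instance {n k : ℕ} (v : Fin n → Fin k) (i : Fin n) : Decidable (isInitialPos v i) := by
  unfold isInitialPos; infer_instance

/-- The sequence of initial letters of `v`, read from left to right. -/
def initialList {n k : ℕ} (v : Fin n → Fin k) : List (Fin k) :=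
  ((List.finRange n).filter fun i => decide (isInitialPos v i)).map v

/-- `v` is the convexification of `w`: the unique convex word with the same letter
multiplicities as `w` whose initial letters appear in the same left-to-right order. -/
def IsConvexification {n k : ℕ} (v w : Fin n → Fin k) : Prop :=
  IsConvexWord v ∧
    (∀ c, (Finset.univ.filter fun i => v i = c).card
      = (Finset.univ.filter fun i => w i = c).card) ∧
    initialList v = initialList w

/-- `s` is the standardization `std(v) ∈ S_n` of a Fubini word `v ∈ {1,…,k}^n`: initial
positions keep their letter, and the letters in non-initial positions are replaced, from left
to right, by `k+1, k+2, …` (everything written 0-indexed). -/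
def IsStdPerm (n k : ℕ) (v : Fin n → Fin k) (s : Equiv.Perm (Fin n)) : Prop :=
  ∀ i : Fin n, (s i : ℕ) =
    if isInitialPos v i then (v i : ℕ)
    else k + (Finset.univ.filter fun i' : Fin n => i' < i ∧ ¬ isInitialPos v i').card

/-- Extend a permutation of `Fin N` to `ℕ`, fixing all `m ≥ N`. -/
def permExt (N : ℕ) (p : Equiv.Perm (Fin N)) : ℕ → ℕ :=
  fun m => if h : m < N then ((p ⟨m, h⟩ : Fin N) : ℕ) else m


namespace Stmt17Aux

open Equiv MvPolynomial Finset



def ext1 {N : ℕ} (p : Equiv.Perm (Fin N)) : Equiv.Perm (Fin (N+1)) where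
  toFun := Fin.lastCases (Fin.last N) (fun i => (p i).castSucc)
  invFun := Fin.lastCases (Fin.last N) (fun i => (p⁻¹ i).castSucc)
  left_inv j := by
    cases j using Fin.lastCases with
    | last => simp
    | cast i => simp
  right_inv j := by
    cases j using Fin.lastCases with
    | last => simp
    | cast i => simp

@[simp] lemma ext1_castSucc {N} (p : Equiv.Perm (Fin N)) (i : Fin N) :
    ext1 p i.castSucc = (p i).castSucc := by
  simp only [ext1, Equiv.coe_fn_mk, Fin.lastCases_castSucc]

@[simp] lemma ext1_last {N} (p : Equiv.Perm (Fin N)) : ext1 p (Fin.last N) = Fin.last N := by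
  simp only [ext1, Equiv.coe_fn_mk, Fin.lastCases_last]

lemma ext1_inv {N} (p : Equiv.Perm (Fin N)) : (ext1 p)⁻¹ = ext1 p⁻¹ := Equiv.ext fun _ => rfl

lemma ext1_mul {N} (p q : Equiv.Perm (Fin N)) : ext1 (p * q) = ext1 p * ext1 q := by
  ext j
  cases j using Fin.lastCases with
  | last => simp [Equiv.Perm.mul_apply]
  | cast i => simp [Equiv.Perm.mul_apply]

lemma ext1_coe {N} (p : Equiv.Perm (Fin N)) (j : Fin (N+1)) :
    (ext1 p j : ℕ) = if h : (j : ℕ) < N then (p ⟨j, h⟩ : ℕ) else N := by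
  cases j using Fin.lastCases with
  | last => simp
  | cast i => simp [Fin.is_lt]

lemma perm_eq_of_coe {N} (p q : Equiv.Perm (Fin N)) (h : ∀ j, (p j : ℕ) = (q j : ℕ)) :
    p = q := Equiv.ext fun j => Fin.ext (h j)

lemma ext1_swap {N} (a b : Fin N) :
    ext1 (Equiv.swap a b) = Equiv.swap a.castSucc b.castSucc := by
  ext j
  cases j using Fin.lastCases with
  | last =>
      rw [ext1_last, Equiv.swap_apply_of_ne_of_ne (Fin.castSucc_lt_last a).ne'
        (Fin.castSucc_lt_last b).ne']
  | cast i =>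
      rw [ext1_castSucc]
      rcases eq_or_ne i a with rfl | ha
      · simp
      rcases eq_or_ne i b with rfl | hb
      · simp
      rw [Equiv.swap_apply_of_ne_of_ne ha hb,
        Equiv.swap_apply_of_ne_of_ne (by simpa using ha) (by simpa using hb)]



def revP (N : ℕ) : Equiv.Perm (Fin N) :=
  Function.Involutive.toPerm
    (fun j => ⟨N - 1 - (j : ℕ), by have := j.isLt; omega⟩)
    (by intro j; have := j.isLt; ext; simp; omega)

@[simp] lemma revP_coe (N : ℕ) (j : Fin N) : (revP N j : ℕ) = N - 1 - (j : ℕ) := rfl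

def eExp (N m j : ℕ) : ℕ := if j < m then N - 1 - j else N - j

noncomputable def QPoly (N m : ℕ) : MvPolynomial ℕ ℤ :=
  ∏ j : Fin (N + 1), X (j : ℕ) ^ eExp N m (j : ℕ)

def noninv {N : ℕ} (u : Equiv.Perm (Fin N)) : ℕ :=
  (Finset.univ.filter (fun p : Fin N × Fin N => p.1 < p.2 ∧ u p.1 < u p.2)).card

section SchSec

variable (Sch : (N : ℕ) → Equiv.Perm (Fin N) → MvPolynomial ℕ ℤ)
    (D : ℕ → MvPolynomial ℕ ℤ → MvPolynomial ℕ ℤ)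
    (hD : ∀ (a : ℕ) (f : MvPolynomial ℕ ℤ),
      (MvPolynomial.X a - MvPolynomial.X (a + 1)) * D a f
        = f - MvPolynomial.rename (⇑(Equiv.swap a (a + 1))) f)
    (hSch0 : ∀ (N : ℕ) (w0 : Equiv.Perm (Fin N)),
      (∀ j : Fin N, (w0 j : ℕ) = N - 1 - (j : ℕ)) →
      Sch N w0 = ∏ j : Fin N, MvPolynomial.X (j : ℕ) ^ (N - 1 - (j : ℕ)))
    (hSch : ∀ (N : ℕ) (w : Equiv.Perm (Fin N)) (a b : Fin N),
      (b : ℕ) = (a : ℕ) + 1 → w b < w a →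
      Sch N (w * Equiv.swap a b) = D (a : ℕ) (Sch N w))

include hD in
lemma D_eq (a : ℕ) (f g : MvPolynomial ℕ ℤ)
    (h : (X a - X (a + 1)) * g = f - rename (⇑(Equiv.swap a (a + 1))) f) :
    D a f = g := by
  have hne : (X a - X (a + 1) : MvPolynomial ℕ ℤ) ≠ 0 := by
    refine sub_ne_zero.mpr ?_
    intro hh
    exact absurd (MvPolynomial.X_injective hh) (by omega)
  exact mul_left_cancel₀ hne ((hD a f).trans h.symm)

lemma poly_step (N m : ℕ) (hm : m < N) :
    (X m - X (m + 1)) * QPoly N (m + 1)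
      = QPoly N m - rename (⇑(Equiv.swap m (m + 1))) (QPoly N m) := by
  set am : Fin (N + 1) := ⟨m, by omega⟩ with ham
  set bm : Fin (N + 1) := ⟨m + 1, by omega⟩ with hbm
  have hab : am ≠ bm := by
    simp only [ham, hbm, Fin.ne_iff_vne]; omega
  have hbmem : bm ∈ Finset.univ.erase am := Finset.mem_erase.mpr ⟨hab.symm, Finset.mem_univ _⟩
  have split : ∀ g : Fin (N + 1) → MvPolynomial ℕ ℤ,
      ∏ j, g j = g am * g bm * ∏ j ∈ (Finset.univ.erase am).erase bm, g j := by
    intro g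
    rw [mul_assoc, Finset.mul_prod_erase _ g hbmem, Finset.mul_prod_erase _ g (Finset.mem_univ _)]
  have hrn : rename (⇑(Equiv.swap m (m + 1))) (QPoly N m)
      = ∏ j : Fin (N + 1), X (Equiv.swap m (m + 1) (j : ℕ)) ^ eExp N m (j : ℕ) := by
    rw [QPoly, map_prod]
    simp [map_pow]
  have hfix : ∀ j : Fin (N + 1), j ∈ (Finset.univ.erase am).erase bm →
      (j : ℕ) ≠ m ∧ (j : ℕ) ≠ m + 1 := by
    intro j hj
    rw [Finset.mem_erase, Finset.mem_erase] at hj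
    constructor
    · intro h; exact hj.2.1 (Fin.ext h)
    · intro h; exact hj.1 (Fin.ext h)
  set A := ∏ j ∈ (Finset.univ.erase am).erase bm, (X (j : ℕ) : MvPolynomial ℕ ℤ) ^ eExp N m (j : ℕ) with hA
  have h1 : eExp N m m = N - 1 - m + 1 := by simp only [eExp]; split_ifs <;> omega
  have h2 : eExp N m (m + 1) = N - 1 - m := by simp only [eExp]; split_ifs <;> omega
  have h3 : eExp N (m + 1) m = N - 1 - m := by simp only [eExp]; split_ifs <;> omega
  have h4 : eExp N (m + 1) (m + 1) = N - 1 - m := by simp only [eExp]; split_ifs <;> omega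
  have e1 : QPoly N m = X m ^ (N - 1 - m + 1) * X (m + 1) ^ (N - 1 - m) * A := by
    rw [QPoly, split]
    rw [h1, h2]
  have e2 : rename (⇑(Equiv.swap m (m + 1))) (QPoly N m)
      = X (m + 1) ^ (N - 1 - m + 1) * X m ^ (N - 1 - m) * A := by
    rw [hrn, split]
    have hAA : ∏ j ∈ (Finset.univ.erase am).erase bm,
        (X (Equiv.swap m (m + 1) (j : ℕ)) : MvPolynomial ℕ ℤ) ^ eExp N m (j : ℕ) = A := by
      refine Finset.prod_congr rfl ?_
      intro j hj
      rw [Equiv.swap_apply_of_ne_of_ne (hfix j hj).1 (hfix j hj).2]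
    rw [hAA]
    rw [Equiv.swap_apply_left, Equiv.swap_apply_right, h1, h2]
  have e3 : QPoly N (m + 1) = X m ^ (N - 1 - m) * X (m + 1) ^ (N - 1 - m) * A := by
    rw [QPoly, split]
    have hAA : ∏ j ∈ (Finset.univ.erase am).erase bm,
        (X (j : ℕ) : MvPolynomial ℕ ℤ) ^ eExp N (m + 1) (j : ℕ) = A := by
      refine Finset.prod_congr rfl ?_
      intro j hj
      congr 1
      simp only [eExp]
      have := (hfix j hj).1
      have := (hfix j hj).2
      split_ifs <;> omega
    rw [hAA]
    rw [h3, h4]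
  rw [e2, e1, e3]
  ring

include hD hSch0 hSch in
lemma chain (N : ℕ) : ∀ m, m ≤ N → ∃ W : Equiv.Perm (Fin (N + 1)),
    (∀ j : Fin (N + 1), (W j : ℕ)
        = if (j : ℕ) < m then N - 1 - (j : ℕ) else if (j : ℕ) = m then N else N - (j : ℕ))
    ∧ Sch (N + 1) W = QPoly N m := by
  intro m
  induction m with
  | zero =>
    intro _
    refine ⟨revP (N + 1), ?_, ?_⟩
    · intro j
      rw [revP_coe]
      have := j.isLt
      split_ifs <;> omega
    · have hco : ∀ j : Fin (N + 1), (revP (N + 1) j : ℕ) = N + 1 - 1 - (j : ℕ) := by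
        intro j; rw [revP_coe]
      rw [hSch0 (N + 1) (revP (N + 1)) hco, QPoly]
      apply Finset.prod_congr rfl
      intro j _
      have := j.isLt
      have he : N + 1 - 1 - (j : ℕ) = eExp N 0 (j : ℕ) := by
        simp only [eExp]; split_ifs <;> omega
      rw [he]
  | succ m ih =>
    intro hm
    obtain ⟨W, hWc, hWs⟩ := ih (by omega)
    set a : Fin (N + 1) := ⟨m, by omega⟩ with ha
    set b : Fin (N + 1) := ⟨m + 1, by omega⟩ with hb
    refine ⟨W * Equiv.swap a b, ?_, ?_⟩
    · intro j
      rw [Equiv.Perm.mul_apply]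
      rcases eq_or_ne j a with rfl | hja
      · rw [Equiv.swap_apply_left, hWc]
        simp only [ha, hb]
        split_ifs <;> omega
      rcases eq_or_ne j b with rfl | hjb
      · rw [Equiv.swap_apply_right, hWc]
        simp only [ha, hb]
        split_ifs <;> omega
      · rw [Equiv.swap_apply_of_ne_of_ne hja hjb, hWc]
        have h1 : (j : ℕ) ≠ m := fun h => hja (Fin.ext h)
        have h2 : (j : ℕ) ≠ m + 1 := fun h => hjb (Fin.ext h)
        split_ifs <;> omega
    · have hlt : W b < W a := by
        rw [Fin.lt_def, hWc, hWc]
        simp only [ha, hb]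
        split_ifs <;> omega
      have := hSch (N + 1) W a b (by simp [ha, hb]) hlt
      rw [this, hWs]
      have : (a : ℕ) = m := rfl
      rw [this]
      exact D_eq D hD m (QPoly N m) (QPoly N (m + 1)) (poly_step N m (by omega))

lemma no_ascent_coords {N : ℕ} (u : Equiv.Perm (Fin N))
    (h : ∀ a b : Fin N, (b : ℕ) = (a : ℕ) + 1 → u b < u a) :
    ∀ j : Fin N, (u j : ℕ) = N - 1 - (j : ℕ) := by
  intro j
  have hN : 0 < N := j.pos
  obtain ⟨M, rfl⟩ : ∃ M, N = M + 1 := ⟨N - 1, by omega⟩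
  have hsm : StrictMono (fun i => u (revP (M + 1) i)) := by
    rw [Fin.strictMono_iff_lt_succ]
    intro i
    apply h
    simp only [revP_coe, Fin.coe_castSucc, Fin.val_succ]
    have := i.isLt
    omega
  let o : Fin (M + 1) ≃o Fin (M + 1) :=
    { toEquiv := (revP (M + 1)).trans u
      map_rel_iff' := by intro a b; exact hsm.le_iff_le }
  have ho : o = OrderIso.refl _ := Subsingleton.elim _ _
  have key : ∀ i, u (revP (M + 1) i) = i := by
    intro i
    have : o i = i := by rw [ho]; rfl
    exact this
  have hrr : revP (M + 1) (revP (M + 1) j) = j := by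
    ext
    simp only [revP_coe]
    have := j.isLt
    omega
  have := key (revP (M + 1) j)
  rw [hrr] at this
  rw [this, revP_coe]

lemma noninv_swap_lt {N : ℕ} (u : Equiv.Perm (Fin N)) (a b : Fin N)
    (hab : (b : ℕ) = (a : ℕ) + 1) (hasc : u a < u b) :
    noninv (u * Equiv.swap a b) < noninv u := by
  classical
  set s := Equiv.swap a b with hsdef
  set S := Finset.univ.filter (fun p : Fin N × Fin N => p.1 < p.2 ∧ u p.1 < u p.2) with hS
  have haltb : a < b := by rw [Fin.lt_def]; omega
  have hmem : (a, b) ∈ S := by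
    rw [hS, Finset.mem_filter]
    exact ⟨Finset.mem_univ _, haltb, hasc⟩
  have key : ∀ x y : Fin N, x < y → ¬(x = a ∧ y = b) → s x < s y := by
    intro x y hxy hne2
    rcases eq_or_ne x a with rfl | hxa
    · have hyb : y ≠ b := fun h => hne2 ⟨rfl, h⟩
      have hya : y ≠ x := hxy.ne'
      rw [hsdef, Equiv.swap_apply_left, Equiv.swap_apply_of_ne_of_ne hya hyb]
      rw [Fin.lt_def] at hxy ⊢
      have h1 : (y : ℕ) ≠ (b : ℕ) := fun h => hyb (Fin.ext h)
      omega
    rcases eq_or_ne x b with rfl | hxb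
    · have hya : y ≠ a := by
        intro h
        rw [Fin.lt_def] at hxy
        subst h
        omega
      have hyb : y ≠ x := hxy.ne'
      rw [hsdef, Equiv.swap_apply_right, Equiv.swap_apply_of_ne_of_ne hya hyb]
      rw [Fin.lt_def] at hxy ⊢
      omega
    rw [hsdef, Equiv.swap_apply_of_ne_of_ne hxa hxb]
    rcases eq_or_ne y a with rfl | hya
    · rw [Equiv.swap_apply_left]
      exact hxy.trans haltb
    rcases eq_or_ne y b with rfl | hyb
    · rw [Equiv.swap_apply_right]
      rw [Fin.lt_def] at hxy ⊢
      have h1 : (x : ℕ) ≠ (a : ℕ) := fun h => hxa (Fin.ext h)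
      omega
    · rw [Equiv.swap_apply_of_ne_of_ne hya hyb]
      exact hxy
  have hle : noninv (u * s) ≤ (S.erase (a, b)).card := by
    apply Finset.card_le_card_of_injOn (fun p => (s p.1, s p.2))
    · intro p hp
      rw [Finset.mem_coe, Finset.mem_filter] at hp
      obtain ⟨-, hp1, hp2⟩ := hp
      have hpab : ¬(p.1 = a ∧ p.2 = b) := by
        rintro ⟨h1, h2⟩
        rw [h1, h2] at hp2
        simp only [Equiv.Perm.mul_apply, hsdef, Equiv.swap_apply_left,
          Equiv.swap_apply_right] at hp2
        exact absurd hasc (asymm hp2)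
      have hslt : s p.1 < s p.2 := key p.1 p.2 hp1 hpab
      rw [Finset.mem_coe, Finset.mem_erase, hS, Finset.mem_filter]
      refine ⟨?_, Finset.mem_univ _, hslt, ?_⟩
      · intro hcon
        have h1 : s p.1 = a := congrArg Prod.fst hcon
        have h2 : s p.2 = b := congrArg Prod.snd hcon
        have hb1 : p.1 = b := by
          have := congrArg s h1
          rwa [Equiv.swap_apply_self, hsdef, Equiv.swap_apply_left] at this
        have hb2 : p.2 = a := by
          have := congrArg s h2
          rwa [Equiv.swap_apply_self, hsdef, Equiv.swap_apply_right] at this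
        rw [hb1, hb2] at hp1
        exact absurd haltb (asymm hp1)
      · simpa [Equiv.Perm.mul_apply] using hp2
    · intro p _ q _ hpq
      have h1 : s p.1 = s q.1 := congrArg Prod.fst hpq
      have h2 : s p.2 = s q.2 := congrArg Prod.snd hpq
      exact Prod.ext (s.injective h1) (s.injective h2)
  calc noninv (u * s) ≤ (S.erase (a, b)).card := hle
    _ < S.card := Finset.card_erase_lt_of_mem hmem
    _ = noninv u := rfl

include hD hSch0 hSch in
lemma sch_stable (N : ℕ) (u : Equiv.Perm (Fin N)) :
    Sch (N + 1) (ext1 u) = Sch N u := by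
  suffices H : ∀ m (u : Equiv.Perm (Fin N)), noninv u = m → Sch (N + 1) (ext1 u) = Sch N u from
    H (noninv u) u rfl
  intro m
  induction m using Nat.strong_induction_on with
  | _ m ih =>
    intro u hu
    by_cases hasc : ∃ a b : Fin N, (b : ℕ) = (a : ℕ) + 1 ∧ u a < u b
    · obtain ⟨a, b, hab, h1⟩ := hasc
      set u' := u * Equiv.swap a b with hu'
      have hub : u' b = u a := by
        rw [hu', Equiv.Perm.mul_apply, Equiv.swap_apply_right]
      have hua : u' a = u b := by
        rw [hu', Equiv.Perm.mul_apply, Equiv.swap_apply_left]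
      have hlt : u' b < u' a := by rw [hub, hua]; exact h1
      have hrec : u' * Equiv.swap a b = u := by
        rw [hu', mul_assoc, Equiv.swap_mul_self, mul_one]
      have e1 : Sch N u = D (a : ℕ) (Sch N u') := by
        rw [← hrec]; exact hSch N u' a b hab hlt
      have e2 : Sch (N + 1) (ext1 u) = D (a : ℕ) (Sch (N + 1) (ext1 u')) := by
        have hdecomp : ext1 u = ext1 u' * Equiv.swap a.castSucc b.castSucc := by
          rw [← ext1_swap, ← ext1_mul, hrec]
        rw [hdecomp]
        have := hSch (N + 1) (ext1 u') a.castSucc b.castSucc (by simp [hab])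
          (by rw [ext1_castSucc, ext1_castSucc]
              exact Fin.castSucc_lt_castSucc_iff.mpr hlt)
        simpa using this
      have hdec : noninv u' < m := hu ▸ noninv_swap_lt u a b hab h1
      rw [e1, e2, ih (noninv u') hdec u' rfl]
    · push_neg at hasc
      have hdesc : ∀ a b : Fin N, (b : ℕ) = (a : ℕ) + 1 → u b < u a := by
        intro a b h
        have hnlt := hasc a b h
        have hne : u b ≠ u a := by
          intro hh
          have : b = a := u.injective hh
          rw [this] at h
          omega
        exact lt_of_le_of_ne hnlt hne
      have hco := no_ascent_coords u hdesc
      obtain ⟨W, hWc, hWs⟩ := chain Sch D hD hSch0 hSch N N le_rfl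
      have hWu : ext1 u = W := by
        apply perm_eq_of_coe
        intro j
        rw [ext1_coe, hWc]
        have := j.isLt
        by_cases h : (j : ℕ) < N
        · rw [dif_pos h, hco ⟨j, h⟩, if_pos h]
        · rw [dif_neg h, if_neg h, if_pos (by omega)]
      rw [hWu, hWs, hSch0 N u hco, QPoly, Fin.prod_univ_castSucc]
      have hlast : eExp N N ((Fin.last N : Fin (N + 1)) : ℕ) = 0 := by
        simp only [Fin.val_last, eExp]
        split_ifs <;> omega
      rw [hlast, pow_zero, mul_one]
      apply Finset.prod_congr rfl
      intro j _
      have hj := j.isLt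
      have : eExp N N ((j.castSucc : Fin (N + 1)) : ℕ) = N - 1 - (j : ℕ) := by
        simp only [Fin.coe_castSucc, eExp]
        split_ifs <;> omega
      rw [this, Fin.coe_castSucc]

end SchSec



section Words

variable {n k : ℕ}

lemma convex_between {v : Fin n → Fin k} (hv : IsConvexWord v)
    {a b c : Fin n} (hab : a ≤ b) (hbc : b ≤ c) (hac : v a = v c) : v b = v a := by
  rcases eq_or_lt_of_le hab with rfl | h1
  · rfl
  rcases eq_or_lt_of_le hbc with rfl | h2
  · exact hac.symm
  exact (hv a b c h1 h2 hac).symm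

lemma exists_initial (v : Fin n → Fin k) (i : Fin n) :
    ∃ p, p ≤ i ∧ v p = v i ∧ isInitialPos v p := by
  have main : ∀ m : ℕ, ∀ i : Fin n, (i : ℕ) = m →
      ∃ p, p ≤ i ∧ v p = v i ∧ isInitialPos v p := by
    intro m
    induction m using Nat.strong_induction_on with
    | _ m ih =>
      intro i hi
      by_cases h : isInitialPos v i
      · exact ⟨i, le_refl i, rfl, h⟩
      · rw [isInitialPos] at h
        push_neg at h
        obtain ⟨j, hj, hje⟩ := h
        have hjm : (j : ℕ) < m := by rw [← hi]; exact hj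
        obtain ⟨p, hp1, hp2, hp3⟩ := ih (j : ℕ) hjm j rfl
        exact ⟨p, le_trans hp1 (le_of_lt hj), hp2.trans hje, hp3⟩
  exact main (i : ℕ) i rfl

lemma not_initial_prev {v : Fin n → Fin k} (hv : IsConvexWord v) {i : Fin n}
    (h : ¬ isInitialPos v i) :
    ∃ p : Fin n, (p : ℕ) + 1 = (i : ℕ) ∧ v p = v i := by
  rw [isInitialPos] at h
  push_neg at h
  obtain ⟨j, hj, hje⟩ := h
  have hji : (j : ℕ) < (i : ℕ) := hj
  have hin : (i : ℕ) - 1 < n := by have := i.isLt; omega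
  refine ⟨⟨(i : ℕ) - 1, hin⟩, by simp only [Fin.val_mk]; omega, ?_⟩
  have h1 : j ≤ (⟨(i : ℕ) - 1, hin⟩ : Fin n) := by
    rw [Fin.le_def]; simp only [Fin.val_mk]; omega
  have h2 : (⟨(i : ℕ) - 1, hin⟩ : Fin n) ≤ i := by
    rw [Fin.le_def]; simp only [Fin.val_mk]; omega
  exact (convex_between hv h1 h2 hje).trans hje

lemma finRange_split (p : Fin n) :
    List.finRange n = (List.finRange n).take (p : ℕ)
      ++ p :: (List.finRange n).drop ((p : ℕ) + 1) := by
  have hlen : (p : ℕ) < (List.finRange n).length := by simp [p.isLt]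
  conv_lhs => rw [← List.take_append_drop (p : ℕ) (List.finRange n)]
  congr 1
  rw [List.drop_eq_getElem_cons hlen]
  congr 1
  ext
  simp [List.getElem_finRange]

lemma mem_take_finRange {i : ℕ} {j : Fin n} (h : j ∈ (List.finRange n).take i) :
    (j : ℕ) < i := by
  rw [List.mem_iff_getElem] at h
  obtain ⟨m, hm, he⟩ := h
  have hlen : m < i := by
    simp only [List.length_take, List.length_finRange] at hm
    omega
  rw [List.getElem_take, List.getElem_finRange] at he
  rw [← he]
  simpa using hlen

lemma mem_drop_finRange {i : ℕ} {j : Fin n} (h : j ∈ (List.finRange n).drop i) :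
    i ≤ (j : ℕ) := by
  rw [List.mem_iff_getElem] at h
  obtain ⟨m, hm, he⟩ := h
  rw [List.getElem_drop, List.getElem_finRange] at he
  rw [← he]
  simp

lemma initialList_concat {v : Fin n → Fin k} {p : Fin n} (hp : isInitialPos v p)
    (hlast : ∀ q : Fin n, p < q → ¬ isInitialPos v q) :
    ∃ A, initialList v = A ++ [v p] := by
  refine ⟨(((List.finRange n).take (p : ℕ)).filter fun i => decide (isInitialPos v i)).map v, ?_⟩
  have hdropnil : ((List.finRange n).drop ((p : ℕ) + 1)).filter
      (fun i => decide (isInitialPos v i)) = [] := by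
    rw [List.filter_eq_nil_iff]
    intro q hq
    have hge := mem_drop_finRange hq
    simp only [decide_eq_true_eq]
    exact hlast q (by rw [Fin.lt_def]; omega)
  rw [initialList]
  conv_lhs => rw [finRange_split p]
  rw [List.filter_append, List.filter_cons_of_pos (by simpa using hp), hdropnil, List.map_append]
  rfl

lemma initial_step_contra {v v' : Fin n → Fin k}
    (hv : IsConvexWord v) (hv' : IsConvexWord v')
    (hm : ∀ c, (Finset.univ.filter fun i => v i = c).card
      = (Finset.univ.filter fun i => v' i = c).card) {i : Fin n}
    (hpre : ∀ j : Fin n, j < i → v j = v' j)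
    (h1 : isInitialPos v i) (h2 : ¬ isInitialPos v' i) : False := by
  classical
  obtain ⟨p, hp1, hp2⟩ := not_initial_prev hv' h2
  set a := v' i with ha
  have hpi : p < i := by rw [Fin.lt_def]; omega
  have hvp : v p = a := by rw [hpre p hpi, hp2]
  have hvia : v i ≠ a := by
    intro h
    exact h1 p hpi (by rw [hvp, h])
  have hocc : ∀ j : Fin n, v j = a → j < i := by
    intro j hj
    by_contra hge
    push_neg at hge
    exact hvia ((convex_between hv (le_of_lt hpi) hge (hvp.trans hj.symm)).trans hvp)
  have hSeq : Finset.univ.filter (fun j => v j = a)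
      = Finset.univ.filter (fun j : Fin n => j < i ∧ v' j = a) := by
    ext j
    simp only [Finset.mem_filter, Finset.mem_univ, true_and]
    constructor
    · intro hja
      exact ⟨hocc j hja, by rw [← hpre j (hocc j hja)]; exact hja⟩
    · rintro ⟨hji, hja⟩
      rw [hpre j hji]; exact hja
  have hsub : insert i (Finset.univ.filter (fun j : Fin n => j < i ∧ v' j = a))
      ⊆ Finset.univ.filter (fun j => v' j = a) := by
    intro j hj
    rw [Finset.mem_insert] at hj
    rcases hj with rfl | hj
    · simp [ha]
    · rw [Finset.mem_filter] at hj ⊢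
      exact ⟨Finset.mem_univ _, hj.2.2⟩
  have hni : i ∉ Finset.univ.filter (fun j : Fin n => j < i ∧ v' j = a) := by
    simp [lt_irrefl]
  have hcard := Finset.card_le_card hsub
  rw [Finset.card_insert_of_notMem hni, ← hSeq] at hcard
  have := hm a
  omega

lemma convex_unique {v v' : Fin n → Fin k}
    (hv : IsConvexWord v) (hv' : IsConvexWord v')
    (hm : ∀ c, (Finset.univ.filter fun i => v i = c).card
      = (Finset.univ.filter fun i => v' i = c).card)
    (hi : initialList v = initialList v') : v = v' := by
  have main : ∀ m : ℕ, ∀ i : Fin n, (i : ℕ) = m → v i = v' i := by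
    intro m
    induction m using Nat.strong_induction_on with
    | _ m ih =>
    intro i him
    have hpre : ∀ j : Fin n, j < i → v j = v' j := by
      intro j hj
      exact ih (j : ℕ) (by rw [← him]; exact hj) j rfl
    by_cases hA : isInitialPos v i
    · by_cases hB : isInitialPos v' i
      · -- both initial: use initialList equality
        have key : ∀ (x : Fin n → Fin k), isInitialPos x i → initialList x
            = (((List.finRange n).take (i : ℕ)).filter (fun j => decide (isInitialPos x j))).map x
              ++ x i :: ((((List.finRange n).drop ((i : ℕ) + 1)).filter
                  (fun j => decide (isInitialPos x j))).map x) := by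
          intro x hx
          rw [initialList]
          conv_lhs => rw [finRange_split i]
          rw [List.filter_append, List.filter_cons_of_pos (by simpa using hx), List.map_append]
          rfl
        have e1 := key v hA
        have e2 := key v' hB
        have hfeq : ((List.finRange n).take (i : ℕ)).filter (fun j => decide (isInitialPos v j))
            = ((List.finRange n).take (i : ℕ)).filter (fun j => decide (isInitialPos v' j)) := by
          apply List.filter_congr
          intro j hj
          have hji : j < i := by rw [Fin.lt_def]; exact mem_take_finRange hj
          have hiff : isInitialPos v j ↔ isInitialPos v' j := by
            unfold isInitialPos
            constructor
            · intro h i' hi'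
              rw [← hpre i' (hi'.trans hji), ← hpre j hji]
              exact h i' hi'
            · intro h i' hi'
              rw [hpre i' (hi'.trans hji), hpre j hji]
              exact h i' hi'
          exact decide_eq_decide.mpr hiff
        have hpref : (((List.finRange n).take (i : ℕ)).filter
              (fun j => decide (isInitialPos v j))).map v
            = (((List.finRange n).take (i : ℕ)).filter
              (fun j => decide (isInitialPos v' j))).map v' := by
          rw [hfeq]
          apply List.map_congr_left
          intro j hj
          have hji : j < i := by
            rw [Fin.lt_def]
            exact mem_take_finRange (List.mem_of_mem_filter hj)
          exact hpre j hji
        rw [e1, e2, hpref] at hi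
        have hcons := List.append_cancel_left hi
        injection hcons
      · exact (initial_step_contra hv hv' hm hpre hA hB).elim
    · by_cases hB : isInitialPos v' i
      · exact (initial_step_contra hv' hv (fun c => (hm c).symm)
          (fun j hj => (hpre j hj).symm) hB hA).elim
      · obtain ⟨p, hp1, hp2⟩ := not_initial_prev hv hA
        obtain ⟨p', hp1', hp2'⟩ := not_initial_prev hv' hB
        have hpp : p = p' := Fin.ext (by omega)
        have hplt : p < i := by rw [Fin.lt_def]; omega
        rw [← hp2, hpre p hplt, hpp, hp2']
  funext i
  exact main (i : ℕ) i rfl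

lemma convex_last_letter {x : Fin n → Fin k} (hx : IsConvexWord x) (hn : 0 < n)
    {c : Fin k} (hB : ∃ B, initialList x = B ++ [c]) :
    x ⟨n - 1, by omega⟩ = c := by
  set lastp : Fin n := ⟨n - 1, by omega⟩ with hl
  obtain ⟨p, hp1, hp2, hp3⟩ := exists_initial x lastp
  have hnolater : ∀ q, p < q → ¬ isInitialPos x q := by
    intro q hpq hq
    have hqlast : q ≤ lastp := by
      rw [Fin.le_def, hl]
      simp only [Fin.val_mk]
      have := q.isLt; omega
    have hxq : x q = x p := convex_between hx (le_of_lt hpq) hqlast hp2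
    exact hq p hpq hxq.symm
  obtain ⟨A, hA⟩ := initialList_concat hp3 hnolater
  obtain ⟨B, hBe⟩ := hB
  rw [hA] at hBe
  have hsg := (List.append_inj' hBe rfl).2
  have : x p = c := by injection hsg
  rw [← this, hp2]

lemma init_snoc_castSucc (x : Fin n → Fin k) (y : Fin k) (j : Fin n) :
    isInitialPos (Fin.snoc x y) j.castSucc ↔ isInitialPos x j := by
  unfold isInitialPos
  constructor
  · intro h i' hi'
    have := h i'.castSucc (Fin.castSucc_lt_castSucc_iff.mpr hi')
    rwa [Fin.snoc_castSucc, Fin.snoc_castSucc] at this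
  · intro h i' hi'
    have hlt : i' ≠ Fin.last n := ne_of_lt (lt_trans hi' (Fin.castSucc_lt_last j))
    obtain ⟨i'', rfl⟩ := Fin.exists_castSucc_eq.mpr hlt
    rw [Fin.snoc_castSucc, Fin.snoc_castSucc]
    exact h i'' (Fin.castSucc_lt_castSucc_iff.mp hi')

lemma not_init_snoc_last (x : Fin n → Fin k) (c' : Fin k) (hx : ∃ i, x i = c') :
    ¬ isInitialPos (Fin.snoc x c') (Fin.last n) := by
  obtain ⟨i, hi⟩ := hx
  intro h
  exact h i.castSucc (Fin.castSucc_lt_last i)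
    (by rw [Fin.snoc_castSucc, Fin.snoc_last, hi])

lemma finRange_succ_snoc (n : ℕ) :
    List.finRange (n + 1) = ((List.finRange n).map Fin.castSucc) ++ [Fin.last n] := by
  apply List.ext_getElem
  · simp
  · intro m h1 h2
    simp only [List.length_finRange] at h1
    rcases Nat.lt_or_ge m n with h | h
    · rw [List.getElem_append_left (by simpa using h), List.getElem_map, List.getElem_finRange,
        List.getElem_finRange]
      ext; simp
    · have hm : m = n := by omega
      subst hm
      rw [List.getElem_append_right (by simp), List.getElem_finRange]
      simp
      ext; simp

lemma initialList_snoc (x : Fin n → Fin k) (c' : Fin k) (hx : ∃ i, x i = c') :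
    initialList (Fin.snoc x c') = initialList x := by
  rw [initialList, initialList, finRange_succ_snoc, List.filter_append]
  have h1 : List.filter (fun i => decide (isInitialPos (Fin.snoc x c') i)) [Fin.last n] = [] := by
    simp [not_init_snoc_last x c' hx]
  rw [h1, List.append_nil, List.filter_map, List.map_map]
  have h2 : ∀ j ∈ List.finRange n,
      ((fun i => decide (isInitialPos (Fin.snoc x c') i)) ∘ Fin.castSucc) j
        = decide (isInitialPos x j) := by
    intro j _
    simp only [Function.comp_apply]
    exact decide_eq_decide.mpr (init_snoc_castSucc x c' j)
  rw [List.filter_congr h2]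
  apply List.map_congr_left
  intro j _
  simp only [Function.comp_apply, Fin.snoc_castSucc]

lemma card_filter_snoc (x : Fin n → Fin k) (y c' : Fin k) :
    (Finset.univ.filter fun i : Fin (n + 1) => (Fin.snoc x y : Fin (n+1) → Fin k) i = c').card
      = (Finset.univ.filter fun i => x i = c').card + if y = c' then 1 else 0 := by
  classical
  rw [Finset.card_filter, Finset.card_filter, Fin.sum_univ_castSucc]
  simp [Fin.snoc_castSucc, Fin.snoc_last]

lemma convex_snoc {v : Fin n → Fin k} {c : Fin k} (hv : IsConvexWord v) (hn : 0 < n)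
    (hl : v ⟨n - 1, by omega⟩ = c) : IsConvexWord (Fin.snoc v c) := by
  intro a b d hab hbd hacd
  have hbne : b ≠ Fin.last n := ne_of_lt (lt_of_lt_of_le hbd (Fin.le_last d))
  have hane : a ≠ Fin.last n := ne_of_lt (lt_of_lt_of_le (hab.trans hbd) (Fin.le_last d))
  obtain ⟨a', rfl⟩ := Fin.exists_castSucc_eq.mpr hane
  obtain ⟨b', rfl⟩ := Fin.exists_castSucc_eq.mpr hbne
  have hab' : a' < b' := Fin.castSucc_lt_castSucc_iff.mp hab
  rcases eq_or_ne d (Fin.last n) with rfl | hdne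
  · rw [Fin.snoc_castSucc, Fin.snoc_last] at hacd
    rw [Fin.snoc_castSucc, Fin.snoc_castSucc]
    have hble : b' ≤ (⟨n - 1, by omega⟩ : Fin n) := by
      rw [Fin.le_def]
      simp only [Fin.val_mk]
      have := b'.isLt; omega
    exact (convex_between hv (le_of_lt hab') hble (hacd.trans hl.symm)).symm
  · obtain ⟨d', rfl⟩ := Fin.exists_castSucc_eq.mpr hdne
    rw [Fin.snoc_castSucc, Fin.snoc_castSucc] at hacd
    rw [Fin.snoc_castSucc, Fin.snoc_castSucc]
    exact hv a' b' d' hab' (Fin.castSucc_lt_castSucc_iff.mp hbd) hacd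

lemma card_initial_eq (v : Fin n → Fin k) (hall : ∀ c', ∃ i, v i = c') :
    (Finset.univ.filter fun i => isInitialPos v i).card = k := by
  classical
  have hb : (Finset.univ.filter fun i => isInitialPos v i).card
      = (Finset.univ : Finset (Fin k)).card := by
    apply Finset.card_bij (fun i _ => v i)
    · intro a _
      exact Finset.mem_univ _
    · intro a1 h1 a2 h2 he
      rw [Finset.mem_filter] at h1 h2
      rcases lt_trichotomy a1 a2 with h | h | h
      · exact absurd he (h2.2 a1 h)
      · exact h
      · exact absurd he.symm (h1.2 a2 h)
    · intro c' _
      obtain ⟨i0, hi0⟩ := hall c'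
      obtain ⟨p, _, hp2, hp3⟩ := exists_initial v i0
      exact ⟨p, Finset.mem_filter.mpr ⟨Finset.mem_univ _, hp3⟩, hp2.trans hi0⟩
  rw [hb, Finset.card_fin]

lemma card_not_initial (v : Fin n → Fin k) (hall : ∀ c', ∃ i, v i = c') :
    (Finset.univ.filter fun i => ¬ isInitialPos v i).card = n - k := by
  classical
  rw [Finset.filter_not, Finset.card_sdiff_of_subset (Finset.filter_subset _ _),
    card_initial_eq v hall]
  simp

section FO

variable {n k : ℕ} (w : Fin n → Fin k) (hw : ∀ c', ∃ i, w i = c')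

include hw in
lemma fo_set_nonempty (c' : Fin k) : {i : ℕ | ∃ h : i < n, w ⟨i, h⟩ = c'}.Nonempty := by
  obtain ⟨i, hi⟩ := hw c'
  exact ⟨(i : ℕ), i.isLt, by rwa [Fin.eta]⟩

include hw in
lemma fo_lt (c' : Fin k) : firstOcc n k w c' < n :=
  (Nat.sInf_mem (fo_set_nonempty w hw c')).1

include hw in
lemma fo_spec (c') : w ⟨firstOcc n k w c', fo_lt w hw c'⟩ = c' := by
  obtain ⟨h1, h2⟩ := Nat.sInf_mem (fo_set_nonempty w hw c')
  exact h2

lemma fo_min {c' : Fin k} {j : Fin n} (hj : w j = c') : firstOcc n k w c' ≤ (j : ℕ) :=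
  Nat.sInf_le ⟨j.isLt, by rwa [Fin.eta]⟩

include hw in
lemma initial_eq_fo {q : Fin n} (hq : isInitialPos w q) : (q : ℕ) = firstOcc n k w (w q) := by
  have hle := fo_min w (rfl : w q = w q)
  rcases eq_or_lt_of_le hle with h | h
  · omega
  · exact absurd (fo_spec w hw (w q)) (hq ⟨firstOcc n k w (w q), fo_lt w hw (w q)⟩ h)

include hw in
lemma initialList_last_w (c : Fin k) (hc : ∀ c', firstOcc n k w c' ≤ firstOcc n k w c) :
    ∃ A, initialList w = A ++ [c] := by
  set pc : Fin n := ⟨firstOcc n k w c, fo_lt w hw c⟩ with hpc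
  have hpcw : w pc = c := fo_spec w hw c
  have hpinit : isInitialPos w pc := by
    intro i' hi' he
    have := fo_min w (he.trans hpcw)
    rw [Fin.lt_def, hpc] at hi'
    simp only [Fin.val_mk] at hi'
    omega
  have hnolater : ∀ q, pc < q → ¬ isInitialPos w q := by
    intro q hq hqinit
    have h1 := initial_eq_fo w hw hqinit
    have h2 := hc (w q)
    rw [Fin.lt_def, hpc] at hq
    simp only [Fin.val_mk] at hq
    omega
  obtain ⟨A, hA⟩ := initialList_concat hpinit hnolater
  exact ⟨A, by rwa [hpcw] at hA⟩

include hw in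
lemma firstOcc_snoc (c c' : Fin k) :
    firstOcc (n + 1) k (Fin.snoc w c) c' = firstOcc n k w c' := by
  have hsnoc : ∀ (i : ℕ) (h : i < n) (h' : i < n + 1),
      (Fin.snoc w c : Fin (n+1) → Fin k) ⟨i, h'⟩ = w ⟨i, h⟩ := by
    intro i h h'
    have : (⟨i, h'⟩ : Fin (n + 1)) = (⟨i, h⟩ : Fin n).castSucc := rfl
    rw [this, Fin.snoc_castSucc]
  apply le_antisymm
  · apply Nat.sInf_le
    refine ⟨by have := fo_lt w hw c'; omega, ?_⟩
    rw [hsnoc _ (fo_lt w hw c')]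
    exact fo_spec w hw c'
  · have hne' : {i : ℕ | ∃ h : i < n + 1, (Fin.snoc w c : Fin (n+1) → Fin k) ⟨i, h⟩ = c'}.Nonempty := by
      obtain ⟨i, hi⟩ := hw c'
      exact ⟨(i : ℕ), by omega, by rw [hsnoc _ i.isLt]; rwa [Fin.eta]⟩
    obtain ⟨h1, h2⟩ := Nat.sInf_mem hne'
    set m := sInf {i : ℕ | ∃ h : i < n + 1, (Fin.snoc w c : Fin (n+1) → Fin k) ⟨i, h⟩ = c'}
    show firstOcc n k w c' ≤ m
    by_cases hlt : m < n
    · apply Nat.sInf_le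
      refine ⟨hlt, ?_⟩
      rw [← hsnoc _ hlt h1]
      exact h2
    · have := fo_lt w hw c'
      omega

lemma sortKey_inj (u : Fin n → Fin k) : Function.Injective (sortKey n k u) := by
  intro a b h
  rw [sortKey, sortKey, toLex_inj] at h
  exact Fin.ext (congrArg Prod.snd h)

include hw in
lemma sortKey_snoc_castSucc (c : Fin k) (i : Fin n) :
    sortKey (n + 1) k (Fin.snoc w c) i.castSucc = toLex (firstOcc n k w (w i), (i : ℕ)) := by
  rw [sortKey, Fin.snoc_castSucc, firstOcc_snoc w hw, Fin.coe_castSucc]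

include hw in
lemma sortKey_snoc_last (c : Fin k) :
    sortKey (n + 1) k (Fin.snoc w c) (Fin.last n) = toLex (firstOcc n k w c, n) := by
  rw [sortKey, Fin.snoc_last, firstOcc_snoc w hw, Fin.val_last]

include hw in
lemma sort_snoc (c : Fin k) (hc : ∀ c', firstOcc n k w c' ≤ firstOcc n k w c) :
    Tuple.sort (sortKey (n + 1) k (Fin.snoc w c)) = ext1 (Tuple.sort (sortKey n k w)) := by
  set τ := Tuple.sort (sortKey n k w) with hτ
  have hsm : StrictMono (sortKey n k w ∘ τ) :=
    (Tuple.monotone_sort _).strictMono_of_injective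
      ((sortKey_inj w).comp τ.injective)
  symm
  rw [Tuple.eq_sort_iff]
  constructor
  · apply StrictMono.monotone
    intro i j hij
    simp only [Function.comp_apply]
    rcases eq_or_ne j (Fin.last n) with rfl | hjne
    · obtain ⟨i', rfl⟩ := Fin.exists_castSucc_eq.mpr (ne_of_lt hij)
      rw [ext1_last, ext1_castSucc, sortKey_snoc_last w hw, sortKey_snoc_castSucc w hw]
      rw [Prod.Lex.lt_iff]
      rcases eq_or_lt_of_le (hc (w (τ i'))) with h | h
      · exact Or.inr ⟨h, (τ i').isLt⟩
      · exact Or.inl h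
    · obtain ⟨j', rfl⟩ := Fin.exists_castSucc_eq.mpr hjne
      have hine : i ≠ Fin.last n := ne_of_lt (lt_trans hij (Fin.castSucc_lt_last j'))
      obtain ⟨i', rfl⟩ := Fin.exists_castSucc_eq.mpr hine
      rw [ext1_castSucc, ext1_castSucc, sortKey_snoc_castSucc w hw, sortKey_snoc_castSucc w hw]
      have := hsm (Fin.castSucc_lt_castSucc_iff.mp hij)
      simp only [Function.comp_apply, sortKey] at this
      exact this
  · intro i j hij hkeq
    exfalso
    have := sortKey_inj (Fin.snoc w c : Fin (n+1) → Fin k) hkeq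
    have := (ext1 τ).injective this
    exact absurd this (ne_of_lt hij)

end FO

end Words


end Stmt17Aux

open Stmt17Aux

/-- Let `w ∈ W_{n,k}` be a Fubini word with last initial letter `c`, and let
`w ⊛ 1 ∈ W_{n+1,k}` be obtained by appending `c` to `w`.  Then:
`conv(w ⊛ 1) = conv(w)` followed by `c`;  `std(conv(w ⊛ 1)) = std(conv(w)) × 1` in `S_{n+1}`;
`σ(w ⊛ 1) = σ(w) × 1` in `S_{n+1}`;  and consequently the Schubert polynomials
`S_w := σ(w)⁻¹ . S_{std(conv(w))}` satisfy `S_{w ⊛ 1} = S_w`.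

Here `Sch` is any family satisfying the defining properties of the classical Schubert
polynomials (staircase monomial at the longest element, divided difference recursion `D`),
and permutations act on polynomials by permuting variables. -/
theorem stmt17 (n k : ℕ) (hk : 0 < k) (hkn : k ≤ n)
    (Sch : (N : ℕ) → Equiv.Perm (Fin N) → MvPolynomial ℕ ℤ)
    (D : ℕ → MvPolynomial ℕ ℤ → MvPolynomial ℕ ℤ)
    (hD : ∀ (a : ℕ) (f : MvPolynomial ℕ ℤ),
      (MvPolynomial.X a - MvPolynomial.X (a + 1)) * D a f
        = f - MvPolynomial.rename (⇑(Equiv.swap a (a + 1))) f)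
    (hSch0 : ∀ (N : ℕ) (w0 : Equiv.Perm (Fin N)),
      (∀ j : Fin N, (w0 j : ℕ) = N - 1 - (j : ℕ)) →
      Sch N w0 = ∏ j : Fin N, MvPolynomial.X (j : ℕ) ^ (N - 1 - (j : ℕ)))
    (hSch : ∀ (N : ℕ) (w : Equiv.Perm (Fin N)) (a b : Fin N),
      (b : ℕ) = (a : ℕ) + 1 → w b < w a →
      Sch N (w * Equiv.swap a b) = D (a : ℕ) (Sch N w))
    -- the Fubini word `w` and its last initial letter `c`
    (w : Fin n → Fin k) (hw : ∀ c, ∃ i, w i = c)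
    (c : Fin k) (hc : ∀ c', firstOcc n k w c' ≤ firstOcc n k w c)
    -- the convexifications of `w` and of `w ⊛ 1`
    (v : Fin n → Fin k) (hv : IsConvexification v w)
    (v1 : Fin (n + 1) → Fin k) (hv1 : IsConvexification v1 (Fin.snoc w c))
    -- the standardizations of those convexifications
    (s : Equiv.Perm (Fin n)) (hs : IsStdPerm n k v s)
    (s1 : Equiv.Perm (Fin (n + 1))) (hs1 : IsStdPerm (n + 1) k v1 s1) :
    v1 = Fin.snoc v c
    ∧ (∀ j : Fin (n + 1), (s1 j : ℕ) =
        if h : (j : ℕ) < n then ((s ⟨j, h⟩ : Fin n) : ℕ) else n)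
    ∧ (∀ j : Fin (n + 1), ((sigmaPerm (n + 1) k (Fin.snoc w c)) j : ℕ) =
        if h : (j : ℕ) < n then ((sigmaPerm n k w ⟨j, h⟩ : Fin n) : ℕ) else n)
    ∧ MvPolynomial.rename (permExt (n + 1) (sigmaPerm (n + 1) k (Fin.snoc w c))⁻¹)
          (Sch (n + 1) s1)
        = MvPolynomial.rename (permExt n (sigmaPerm n k w)⁻¹) (Sch n s) := by
  classical
  have hn0 : 0 < n := lt_of_lt_of_le hk hkn
  -- every letter appears in v
  have hvall : ∀ c', ∃ i, v i = c' := by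
    intro c'
    have hpos : 0 < (Finset.univ.filter fun i => v i = c').card := by
      rw [hv.2.1 c']
      obtain ⟨i, hi⟩ := hw c'
      exact Finset.card_pos.mpr ⟨i, Finset.mem_filter.mpr ⟨Finset.mem_univ _, hi⟩⟩
    obtain ⟨i, hi⟩ := Finset.card_pos.mp hpos
    exact ⟨i, (Finset.mem_filter.mp hi).2⟩
  -- v ends with the letter c
  have hvlist : ∃ A, initialList v = A ++ [c] := by
    obtain ⟨A, hA⟩ := initialList_last_w w hw c hc
    exact ⟨A, by rw [hv.2.2, hA]⟩
  have hlastv : v ⟨n - 1, by omega⟩ = c := convex_last_letter hv.1 hn0 hvlist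
  -- snoc v c is a convexification of snoc w c
  have hconv : IsConvexWord (Fin.snoc v c) := convex_snoc hv.1 hn0 hlastv
  have hmult : ∀ c', (Finset.univ.filter fun i : Fin (n + 1) => (Fin.snoc v c : Fin (n+1) → Fin k) i = c').card
      = (Finset.univ.filter fun i : Fin (n + 1) => (Fin.snoc w c : Fin (n+1) → Fin k) i = c').card := by
    intro c'
    rw [card_filter_snoc v c c', card_filter_snoc w c c', hv.2.1 c']
  have hil : initialList (Fin.snoc v c) = initialList (Fin.snoc w c) := by
    rw [initialList_snoc v c (hvall c), initialList_snoc w c (hw c), hv.2.2]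
  have h1 : v1 = Fin.snoc v c := by
    apply convex_unique hv1.1 hconv
    · intro c'
      exact (hv1.2.1 c').trans (hmult c').symm
    · rw [hv1.2.2, hil]
  -- part 2
  have hinit_last : ¬ isInitialPos v1 (Fin.last n) := by
    rw [h1]; exact not_init_snoc_last v c (hvall c)
  have hcount : (Finset.univ.filter fun i' : Fin (n + 1) =>
      i' < Fin.last n ∧ ¬ isInitialPos v1 i').card = n - k := by
    rw [h1, Finset.card_filter, Fin.sum_univ_castSucc]
    have hlastz : (if Fin.last n < Fin.last n ∧
        ¬ isInitialPos (Fin.snoc v c) (Fin.last n) then 1 else 0) = 0 :=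
      if_neg (by rintro ⟨hlt, -⟩; exact absurd hlt (lt_irrefl _))
    rw [hlastz, add_zero, ← card_not_initial v hvall, Finset.card_filter]
    apply Finset.sum_congr rfl
    intro x _
    apply if_congr _ rfl rfl
    constructor
    · rintro ⟨-, h2⟩
      exact (not_congr (init_snoc_castSucc v c x)).mp h2
    · intro h2
      exact ⟨Fin.castSucc_lt_last x, (not_congr (init_snoc_castSucc v c x)).mpr h2⟩
  have part2 : ∀ j : Fin (n + 1), (s1 j : ℕ) =
      if h : (j : ℕ) < n then ((s ⟨j, h⟩ : Fin n) : ℕ) else n := by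
    intro j
    rcases lt_or_ge (j : ℕ) n with h | h
    · rw [dif_pos h]
      set jj : Fin n := ⟨(j : ℕ), h⟩ with hjj
      have hj : j = jj.castSucc := by ext; simp [hjj]
      rw [hj, hs1 jj.castSucc, hs jj]
      by_cases hini : isInitialPos v jj
      · rw [if_pos (by rw [h1]; exact (init_snoc_castSucc v c jj).mpr hini), if_pos hini,
          h1, Fin.snoc_castSucc]
      · rw [if_neg (by rw [h1]; exact fun hh => hini ((init_snoc_castSucc v c jj).mp hh)),
          if_neg hini]
        congr 1
        rw [h1, Finset.card_filter, Finset.card_filter, Fin.sum_univ_castSucc]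
        have hlastz : (if Fin.last n < jj.castSucc ∧
            ¬ isInitialPos (Fin.snoc v c) (Fin.last n) then 1 else 0) = 0 :=
          if_neg (by
            rintro ⟨hlt, -⟩
            exact absurd hlt (not_lt.mpr (le_of_lt (Fin.castSucc_lt_last jj))))
        rw [hlastz, add_zero]
        apply Finset.sum_congr rfl
        intro x _
        apply if_congr _ rfl rfl
        exact and_congr Fin.castSucc_lt_castSucc_iff (not_congr (init_snoc_castSucc v c x))
    · rw [dif_neg (by omega)]
      have hj : j = Fin.last n := by
        ext
        simp only [Fin.val_last]
        have := j.isLt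
        omega
      rw [hj, hs1 (Fin.last n), if_neg hinit_last, hcount]
      omega
  -- part 3
  have hsig : sigmaPerm (n + 1) k (Fin.snoc w c) = ext1 (sigmaPerm n k w) := by
    rw [sigmaPerm, sort_snoc w hw c hc, ext1_inv, sigmaPerm]
  have part3 : ∀ j : Fin (n + 1), ((sigmaPerm (n + 1) k (Fin.snoc w c)) j : ℕ) =
      if h : (j : ℕ) < n then ((sigmaPerm n k w ⟨j, h⟩ : Fin n) : ℕ) else n := by
    intro j
    rw [hsig]
    exact ext1_coe _ j
  -- part 4
  have hs1e : s1 = ext1 s :=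
    perm_eq_of_coe _ _ (fun j => (part2 j).trans (ext1_coe s j).symm)
  have hperm : permExt (n + 1) (sigmaPerm (n + 1) k (Fin.snoc w c))⁻¹
      = permExt n (sigmaPerm n k w)⁻¹ := by
    funext m
    rw [hsig, ext1_inv]
    unfold permExt
    split_ifs with h1 h2 h2
    · rw [ext1_coe]
      have hval : ((⟨m, h1⟩ : Fin (n + 1)) : ℕ) = m := rfl
      rw [hval, dif_pos h2]
    · rw [ext1_coe]
      have hval : ((⟨m, h1⟩ : Fin (n + 1)) : ℕ) = m := rfl
      rw [hval, dif_neg h2]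
      omega
    · omega
    · rfl
  have hfinal : Sch (n + 1) s1 = Sch n s := by
    rw [hs1e]
    exact sch_stable Sch D hD hSch0 hSch n s
  exact ⟨h1, part2, part3, by rw [hperm, hfinal]⟩
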